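/- Suppose θ ∈ (0, π/2), φ ∈ (−π/2, 0), s1, s2, s3 > 0 and the junction triangle is non-degenerate, i.e., (s1 sin(θ−φ) + s3 sin φ − s2 sin θ)² + 4 s2 s3 sin φ sin θ ≠ 0. Then for all h1, h2, h3 > 0, the quantity 2 g^{5/2} sqrt(h1 h2 h3) (sqrt(h1 h2) s3 + sqrt(h1 h3) s2 + sqrt(h2 h3) s1) · (4 s2 s3/sin(θ−φ) + (s1 sin(θ−φ) + s3 sin φ − s2 sin θ)²/(sin(θ−φ) sin φ sin θ)) is nonzero. -/

import Mathlib

/-- For a non-degenerate junction triangle, the Jacobian determinant of the junction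
Riemann-solver map at a zero-velocity state is nonzero. -/
theorem junction_jacobian_nonzero (g θ φ s1 s2 s3 h1 h2 h3 : ℝ)
    (hg : 0 < g)
    (hθ1 : 0 < θ) (hθ2 : θ < Real.pi / 2)
    (hφ1 : -(Real.pi / 2) < φ) (hφ2 : φ < 0)
    (hs1 : 0 < s1) (hs2 : 0 < s2) (hs3 : 0 < s3)
    (hh1 : 0 < h1) (hh2 : 0 < h2) (hh3 : 0 < h3)
    (hnondeg : (s1 * Real.sin (θ - φ) + s3 * Real.sin φ - s2 * Real.sin θ)^2
        + 4 * s2 * s3 * Real.sin φ * Real.sin θ ≠ 0) :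
    2 * g^2 * Real.sqrt g * Real.sqrt (h1 * h2 * h3) *
      (Real.sqrt (h1 * h2) * s3 + Real.sqrt (h1 * h3) * s2 + Real.sqrt (h2 * h3) * s1) *
      (4 * s2 * s3 / Real.sin (θ - φ)
        + (s1 * Real.sin (θ - φ) + s3 * Real.sin φ - s2 * Real.sin θ)^2
            / (Real.sin (θ - φ) * Real.sin φ * Real.sin θ)) ≠ 0 := by
  have hπ := Real.pi_pos
  have hsθ : 0 < Real.sin θ := Real.sin_pos_of_pos_of_lt_pi hθ1 (by linarith)
  have hsφ : Real.sin φ < 0 := Real.sin_neg_of_neg_of_neg_pi_lt hφ2 (by linarith)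
  have hsA : 0 < Real.sin (θ - φ) :=
    Real.sin_pos_of_pos_of_lt_pi (by linarith) (by linarith)
  have hlast : (4 * s2 * s3 / Real.sin (θ - φ)
        + (s1 * Real.sin (θ - φ) + s3 * Real.sin φ - s2 * Real.sin θ)^2
            / (Real.sin (θ - φ) * Real.sin φ * Real.sin θ)) ≠ 0 := by
    intro h0
    apply hnondeg
    have hd : Real.sin (θ - φ) * Real.sin φ * Real.sin θ ≠ 0 := by
      refine mul_ne_zero (mul_ne_zero hsA.ne' hsφ.ne) hsθ.ne'
    field_simp at h0
    have hfac : Real.sin (θ - φ) * ((s1 * Real.sin (θ - φ) + s3 * Real.sin φ - s2 * Real.sin θ)^2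
        + 4 * s2 * s3 * Real.sin φ * Real.sin θ) = 0 := by linear_combination (Real.sin (θ - φ) * Real.sin φ) * h0 - Real.sin (θ - φ) * (s1 * Real.sin (θ - φ) + s3 * Real.sin φ - s2 * Real.sin θ)^2 * (mul_inv_cancel₀ hsφ.ne)
    rcases mul_eq_zero.mp hfac with h | h
    · exact absurd h hsA.ne'
    · exact h
  have h1' : 0 < Real.sqrt g := Real.sqrt_pos.mpr hg
  have h2' : 0 < Real.sqrt (h1 * h2 * h3) := Real.sqrt_pos.mpr (by positivity)
  have h3' : 0 < Real.sqrt (h1 * h2) * s3 + Real.sqrt (h1 * h3) * s2 + Real.sqrt (h2 * h3) * s1 := by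
    have := Real.sqrt_pos.mpr (mul_pos hh1 hh2)
    have := Real.sqrt_pos.mpr (mul_pos hh1 hh3)
    have := Real.sqrt_pos.mpr (mul_pos hh2 hh3)
    positivity
  exact mul_ne_zero (by positivity) hlast
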